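/- Let -1/2 < d < 0 and γ(h) = (Γ(1−2d)/(Γ(1−d)·Γ(d)))·Γ(h+d)/Γ(h+1−d). Then as n → ∞, −2(n−1)·∑_{h=n−1}^∞ γ(h) → +∞. -/

import Mathlib

open Filter Real Topology

/-- Log-convexity of Gamma in multiplicative form. -/
lemma gamma_combo {x y a b : ℝ} (hx : 0 < x) (hy : 0 < y) (ha : 0 ≤ a) (hb : 0 ≤ b)
    (hab : a + b = 1) :
    Real.Gamma (a * x + b * y) ≤ Real.Gamma x ^ a * Real.Gamma y ^ b := by
  have h := Real.convexOn_log_Gamma.2 (Set.mem_Ioi.2 hx) (Set.mem_Ioi.2 hy) ha hb hab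
  simp only [Function.comp, smul_eq_mul] at h
  have hxy : 0 < a * x + b * y := by
    rcases eq_or_lt_of_le ha with h0 | h0
    · have hb1 : b = 1 := by linarith
      have : a * x = 0 := by rw [← h0]; ring
      nlinarith
    · nlinarith [mul_nonneg hb hy.le]
  have hgx := Real.Gamma_pos_of_pos hx
  have hgy := Real.Gamma_pos_of_pos hy
  calc Real.Gamma (a * x + b * y)
      = Real.exp (Real.log (Real.Gamma (a * x + b * y))) :=
        (Real.exp_log (Real.Gamma_pos_of_pos hxy)).symm
    _ ≤ Real.exp (a * Real.log (Real.Gamma x) + b * Real.log (Real.Gamma y)) :=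
        Real.exp_le_exp.2 h
    _ = Real.Gamma x ^ a * Real.Gamma y ^ b := by
        rw [Real.exp_add, Real.rpow_def_of_pos hgx, Real.rpow_def_of_pos hgy,
          mul_comm (Real.log (Real.Gamma x)), mul_comm (Real.log (Real.Gamma y))]

lemma gammaB {d x : ℝ} (hd1 : -(1 / 2) < d) (hd2 : d < 0) (hx : 0 < x) :
    Real.Gamma (x - 2 * d) ≤ Real.Gamma x * x ^ (-(2 * d)) := by
  have h := gamma_combo hx (by linarith : (0:ℝ) < x + 1)
    (by linarith : (0:ℝ) ≤ 1 + 2 * d) (by linarith : (0:ℝ) ≤ -(2 * d)) (by ring)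
  rw [show (1 + 2 * d) * x + -(2 * d) * (x + 1) = x - 2 * d by ring] at h
  have hgx := Real.Gamma_pos_of_pos hx
  rw [Real.Gamma_add_one hx.ne'] at h
  have key : Real.Gamma x ^ (1 + 2 * d) * (x * Real.Gamma x) ^ (-(2 * d))
      = Real.Gamma x * x ^ (-(2 * d)) := by
    rw [Real.mul_rpow hx.le hgx.le]
    have h1 : Real.Gamma x ^ (1 + 2 * d) * Real.Gamma x ^ (-(2 * d)) = Real.Gamma x := by
      rw [← Real.rpow_add hgx]; norm_num
    calc Real.Gamma x ^ (1 + 2 * d) * (x ^ (-(2 * d)) * Real.Gamma x ^ (-(2 * d)))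
        = Real.Gamma x ^ (1 + 2 * d) * Real.Gamma x ^ (-(2 * d)) * x ^ (-(2 * d)) := by ring
      _ = Real.Gamma x * x ^ (-(2 * d)) := by rw [h1]
  linarith [key ▸ h]

lemma gammaB' {d y : ℝ} (hd1 : -(1 / 2) < d) (hd2 : d < 0) (hy : 1 < y) :
    Real.Gamma (y + 2 * d) ≤ Real.Gamma y * (y - 1) ^ (2 * d) := by
  have hy0 : (0:ℝ) < y := by linarith
  have hy1 : (0:ℝ) < y - 1 := by linarith
  have h := gamma_combo hy0 hy1
    (by linarith : (0:ℝ) ≤ 1 + 2 * d) (by linarith : (0:ℝ) ≤ -(2 * d)) (by ring)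
  rw [show (1 + 2 * d) * y + -(2 * d) * (y - 1) = y + 2 * d by ring] at h
  have hgy := Real.Gamma_pos_of_pos hy0
  have hgy1 := Real.Gamma_pos_of_pos hy1
  have hrec : Real.Gamma y = (y - 1) * Real.Gamma (y - 1) := by
    have := Real.Gamma_add_one hy1.ne'
    rw [sub_add_cancel] at this
    exact this
  have hG1 : Real.Gamma (y - 1) = Real.Gamma y / (y - 1) := by
    field_simp [hrec]
    exact hrec.symm
  have key : Real.Gamma y ^ (1 + 2 * d) * Real.Gamma (y - 1) ^ (-(2 * d))
      = Real.Gamma y * (y - 1) ^ (2 * d) := by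
    rw [hG1, Real.div_rpow hgy.le hy1.le]
    have h1 : Real.Gamma y ^ (1 + 2 * d) * Real.Gamma y ^ (-(2 * d)) = Real.Gamma y := by
      rw [← Real.rpow_add hgy]; norm_num
    have h2 : ((y - 1) ^ (-(2 * d)))⁻¹ = (y - 1) ^ (2 * d) := by
      rw [← Real.rpow_neg hy1.le]; norm_num
    calc Real.Gamma y ^ (1 + 2 * d) * (Real.Gamma y ^ (-(2 * d)) / (y - 1) ^ (-(2 * d)))
        = Real.Gamma y ^ (1 + 2 * d) * Real.Gamma y ^ (-(2 * d)) * ((y - 1) ^ (-(2 * d)))⁻¹ := by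
          ring
      _ = Real.Gamma y * (y - 1) ^ (2 * d) := by rw [h1, h2]
  linarith [key ▸ h]

/-- Telescoping identity for the Gamma ratio. -/
lemma gamma_tele {d : ℝ} (hd1 : -(1 / 2) < d) (hd2 : d < 0) (x : ℝ) (hx : 1 ≤ x) :
    Real.Gamma (x + 1 + d) / Real.Gamma (x + 1 - d) - Real.Gamma (x + d) / Real.Gamma (x - d)
      = 2 * d * (Real.Gamma (x + d) / Real.Gamma (x + 1 - d)) := by
  have hxd : (0:ℝ) < x + d := by linarith
  have hxd' : (0:ℝ) < x - d := by linarith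
  have h1 : Real.Gamma (x + 1 + d) = (x + d) * Real.Gamma (x + d) := by
    have := Real.Gamma_add_one hxd.ne'
    rw [show x + d + 1 = x + 1 + d by ring] at this
    exact this
  have h2 : Real.Gamma (x + 1 - d) = (x - d) * Real.Gamma (x - d) := by
    have := Real.Gamma_add_one hxd'.ne'
    rw [show x - d + 1 = x + 1 - d by ring] at this
    exact this
  have hg1 := (Real.Gamma_pos_of_pos hxd').ne'
  have hg2 := (Real.Gamma_pos_of_pos (show (0:ℝ) < x + 1 - d by linarith)).ne'
  rw [h1, h2]
  field_simp
  ring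

theorem tail_sum_diverges (d : ℝ) (hd1 : -(1 / 2) < d) (hd2 : d < 0)
    (γ : ℕ → ℝ)
    (hγ : ∀ h : ℕ, γ h = Real.Gamma (1 - 2 * d) / (Real.Gamma (1 - d) * Real.Gamma d) *
        (Real.Gamma ((h : ℝ) + d) / Real.Gamma ((h : ℝ) + 1 - d))) :
    Filter.Tendsto (fun n : ℕ => -2 * ((n : ℝ) - 1) * ∑' h : ℕ, γ ((n - 1) + h))
      Filter.atTop Filter.atTop := by
  have hd0 : d ≠ 0 := hd2.ne
  have h2d : (0:ℝ) < -(2 * d) := by linarith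
  have h12d : (0:ℝ) < 1 + 2 * d := by linarith
  set C := Real.Gamma (1 - 2 * d) / (Real.Gamma (1 - d) * Real.Gamma d) with hCdef
  have hΓd : Real.Gamma d < 0 := by
    have h1 : Real.Gamma (d + 1) = d * Real.Gamma d := Real.Gamma_add_one hd0
    have h2 : 0 < Real.Gamma (d + 1) := Real.Gamma_pos_of_pos (by linarith)
    nlinarith
  have hC : C < 0 := by
    have h1 : 0 < Real.Gamma (1 - 2 * d) := Real.Gamma_pos_of_pos (by linarith)
    have h2 : 0 < Real.Gamma (1 - d) := Real.Gamma_pos_of_pos (by linarith)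
    exact div_neg_of_pos_of_neg h1 (mul_neg_of_pos_of_neg h2 hΓd)
  have hCd : 0 < C / d := div_pos_of_neg_of_neg hC hd2
  set A : ℝ → ℝ := fun x => Real.Gamma (x + d) / Real.Gamma (x - d) with hAdef
  have hApos : ∀ x : ℝ, 1 ≤ x → 0 < A x := by
    intro x hx
    exact div_pos (Real.Gamma_pos_of_pos (by linarith)) (Real.Gamma_pos_of_pos (by linarith))
  have hAupper : ∀ x : ℝ, 1 ≤ x → A x ≤ (x - d - 1) ^ (2 * d) := by
    intro x hx
    have hy : 1 < x - d := by linarith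
    have h := gammaB' hd1 hd2 hy
    rw [show x - d + 2 * d = x + d by ring] at h
    have hΓ : 0 < Real.Gamma (x - d) := Real.Gamma_pos_of_pos (by linarith)
    rw [hAdef]
    simp only
    rw [div_le_iff₀ hΓ]
    calc Real.Gamma (x + d) ≤ Real.Gamma (x - d) * (x - d - 1) ^ (2 * d) := h
      _ = (x - d - 1) ^ (2 * d) * Real.Gamma (x - d) := mul_comm _ _
  have hAlower : ∀ x : ℝ, 1 ≤ x → (x + d) ^ (2 * d) ≤ A x := by
    intro x hx
    have hxd : (0:ℝ) < x + d := by linarith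
    have h := gammaB hd1 hd2 hxd
    rw [show x + d - 2 * d = x - d by ring] at h
    have hΓxd : 0 < Real.Gamma (x - d) := Real.Gamma_pos_of_pos (by linarith)
    rw [hAdef]
    simp only
    rw [le_div_iff₀ hΓxd]
    calc (x + d) ^ (2 * d) * Real.Gamma (x - d)
        ≤ (x + d) ^ (2 * d) * (Real.Gamma (x + d) * (x + d) ^ (-(2 * d))) :=
          mul_le_mul_of_nonneg_left h (Real.rpow_nonneg hxd.le _)
      _ = (x + d) ^ (2 * d) * (x + d) ^ (-(2 * d)) * Real.Gamma (x + d) := by ring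
      _ = Real.Gamma (x + d) := by rw [← Real.rpow_add hxd]; norm_num
  -- tsum evaluation for m ≥ 1
  have key : ∀ m : ℕ, 1 ≤ m → (∑' h : ℕ, γ (m + h)) = C * (A m / (-(2 * d))) := by
    intro m hm
    have hm1 : (1:ℝ) ≤ (m:ℝ) := by exact_mod_cast hm
    have hsum_t : HasSum
        (fun h : ℕ => Real.Gamma ((↑(m + h) : ℝ) + d) / Real.Gamma ((↑(m + h) : ℝ) + 1 - d))
        (A m / (-(2 * d))) := by
      rw [hasSum_iff_tendsto_nat_of_nonneg]
      · have hps : ∀ N : ℕ, ∑ h ∈ Finset.range N,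
            Real.Gamma ((↑(m + h) : ℝ) + d) / Real.Gamma ((↑(m + h) : ℝ) + 1 - d)
            = (A ((m:ℝ) + N) - A (m:ℝ)) / (2 * d) := by
          intro N
          have hsr := Finset.sum_range_sub (fun i : ℕ => A ((m:ℝ) + i) / (2 * d)) N
          have hpt : ∀ h : ℕ,
              Real.Gamma ((↑(m + h) : ℝ) + d) / Real.Gamma ((↑(m + h) : ℝ) + 1 - d)
              = A ((m:ℝ) + (h + 1)) / (2 * d) - A ((m:ℝ) + h) / (2 * d) := by
            intro h
            have hx : (1:ℝ) ≤ (m:ℝ) + h := by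
              have : (0:ℝ) ≤ (h:ℝ) := Nat.cast_nonneg h
              linarith
            have ht := gamma_tele hd1 hd2 ((m:ℝ) + h) hx
            rw [hAdef]
            simp only
            push_cast
            rw [div_sub_div_same, show (m:ℝ) + ((h:ℝ) + 1) + d = (m:ℝ) + (h:ℝ) + 1 + d by ring,
              show (m:ℝ) + ((h:ℝ) + 1) - d = (m:ℝ) + (h:ℝ) + 1 - d by ring]
            rw [ht]
            have hQ : Real.Gamma ((m:ℝ) + (h:ℝ) + 1 - d) ≠ 0 :=
              (Real.Gamma_pos_of_pos (by linarith)).ne'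
            have h2d' : (2 * d : ℝ) ≠ 0 := by linarith
            field_simp
          calc ∑ h ∈ Finset.range N,
              Real.Gamma ((↑(m + h) : ℝ) + d) / Real.Gamma ((↑(m + h) : ℝ) + 1 - d)
              = ∑ h ∈ Finset.range N,
                (A ((m:ℝ) + (h + 1)) / (2 * d) - A ((m:ℝ) + h) / (2 * d)) :=
                Finset.sum_congr rfl fun h _ => hpt h
            _ = A ((m:ℝ) + N) / (2 * d) - A ((m:ℝ) + 0) / (2 * d) := by
                have := Finset.sum_range_sub (fun i : ℕ => A ((m:ℝ) + i) / (2 * d)) N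
                simpa using this
            _ = (A ((m:ℝ) + N) - A (m:ℝ)) / (2 * d) := by
                rw [add_zero]; ring
        rw [tendsto_congr hps]
        have hA0 : Tendsto (fun N : ℕ => A ((m:ℝ) + N)) atTop (𝓝 0) := by
          have hg : Tendsto (fun N : ℕ => ((m:ℝ) + N - d - 1) ^ (2 * d)) atTop (𝓝 0) := by
            have h1 : Tendsto (fun N : ℕ => (m:ℝ) + N - d - 1) atTop atTop := by
              have := tendsto_atTop_add_const_right atTop ((m:ℝ) - d - 1)
                (tendsto_natCast_atTop_atTop (R := ℝ))
              exact this.congr (fun N => by ring)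
            have h2 : Tendsto (fun x : ℝ => x ^ (2 * d)) atTop (𝓝 0) := by
              rw [show (2 * d : ℝ) = -(-(2 * d)) by ring]
              exact tendsto_rpow_neg_atTop h2d
            exact h2.comp h1
          refine squeeze_zero (fun N => ?_) (fun N => ?_) hg
          · have : (0:ℝ) ≤ (N:ℝ) := Nat.cast_nonneg N
            exact (hApos _ (by linarith)).le
          · have : (1:ℝ) ≤ (m:ℝ) + N := by
              have : (0:ℝ) ≤ (N:ℝ) := Nat.cast_nonneg N
              linarith
            exact hAupper _ this
        have := (hA0.sub_const (A (m:ℝ))).div_const (2 * d)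
        rw [zero_sub] at this
        convert this using 2
        rw [neg_div, div_neg]
      · intro i
        have hi : (1:ℝ) ≤ (↑(m + i) : ℝ) := by
          have : 1 ≤ m + i := le_trans hm (Nat.le_add_right m i)
          exact_mod_cast this
        exact div_nonneg (Real.Gamma_pos_of_pos (by linarith)).le
          (Real.Gamma_pos_of_pos (by linarith)).le
    have hsum_γ : HasSum (fun h : ℕ => γ (m + h)) (C * (A m / (-(2 * d)))) := by
      have h2 := hsum_t.mul_left C
      have heq : (fun h : ℕ => γ (m + h))
          = fun h : ℕ => C * (Real.Gamma ((↑(m + h) : ℝ) + d) /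
            Real.Gamma ((↑(m + h) : ℝ) + 1 - d)) :=
        funext fun h => hγ (m + h)
      rw [heq]
      exact h2
    exact hsum_γ.tsum_eq
  -- eventual lower bound
  have hmono : ∀ n : ℕ, 2 ≤ n →
      C / d * ((↑(n - 1) : ℝ)) ^ (1 + 2 * d)
        ≤ -2 * ((n : ℝ) - 1) * ∑' h : ℕ, γ ((n - 1) + h) := by
    intro n hn
    set m := n - 1 with hmdef
    have hm : 1 ≤ m := by omega
    have hm1 : (1:ℝ) ≤ (m:ℝ) := by exact_mod_cast hm
    have hcast : (n:ℝ) - 1 = (m:ℝ) := by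
      have hn1 : n = m + 1 := by omega
      rw [hn1]; push_cast; ring
    rw [key m hm, hcast]
    have hmd : (0:ℝ) < (m:ℝ) + d := by linarith
    have hAm : (m:ℝ) ^ (2 * d) ≤ A (m:ℝ) := by
      refine le_trans ?_ (hAlower (m:ℝ) hm1)
      exact Real.rpow_le_rpow_of_nonpos hmd (by linarith) (by linarith)
    have hsplit : (m:ℝ) ^ (1 + 2 * d) = (m:ℝ) * (m:ℝ) ^ (2 * d) := by
      rw [Real.rpow_add (by linarith : (0:ℝ) < (m:ℝ)), Real.rpow_one]
    have hRHS : -2 * (m:ℝ) * (C * (A (m:ℝ) / (-(2 * d)))) = C / d * ((m:ℝ) * A (m:ℝ)) := by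
      field_simp
    rw [hRHS, hsplit]
    have h1 : (m:ℝ) * (m:ℝ) ^ (2 * d) ≤ (m:ℝ) * A (m:ℝ) :=
      mul_le_mul_of_nonneg_left hAm (by linarith)
    exact mul_le_mul_of_nonneg_left h1 hCd.le
  have hg : Tendsto (fun n : ℕ => C / d * ((↑(n - 1) : ℝ)) ^ (1 + 2 * d)) atTop atTop := by
    apply Tendsto.const_mul_atTop hCd
    exact (tendsto_rpow_atTop h12d).comp
      (tendsto_natCast_atTop_atTop.comp (tendsto_sub_atTop_nat 1))
  exact tendsto_atTop_mono' atTop ((eventually_ge_atTop 2).mono hmono) hg
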